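/- The subgroup of SL(2,ℤ) generated by a = [[0,-1],[1,-1]] and b = [[1,-3],[1,-2]] is isomorphic to the free product ℤ/3ℤ ∗ ℤ/3ℤ; equivalently, no nonempty reduced word alternating between {a,a²} and {b,b²} equals the identity. -/

import Mathlib

open Matrix

def aSL : Matrix.SpecialLinearGroup (Fin 2) ℤ :=
  ⟨!![0, -1; 1, -1], by norm_num [Matrix.det_fin_two_of]⟩

def bSL : Matrix.SpecialLinearGroup (Fin 2) ℤ :=
  ⟨!![1, -3; 1, -2], by norm_num [Matrix.det_fin_two_of]⟩

namespace VeechAux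

abbrev SL2 := Matrix.SpecialLinearGroup (Fin 2) ℤ
abbrev M3 := Multiplicative (ZMod 3)

instance : SMul SL2 (Fin 2 → ℤ) := ⟨fun g v => (g : Matrix (Fin 2) (Fin 2) ℤ) *ᵥ v⟩

lemma smul_def (g : SL2) (v : Fin 2 → ℤ) :
    g • v = (g : Matrix (Fin 2) (Fin 2) ℤ) *ᵥ v := rfl

instance : MulAction SL2 (Fin 2 → ℤ) where
  one_smul v := by simp [smul_def]
  mul_smul g h v := by simp [smul_def, ← Matrix.mulVec_mulVec]

lemma a3 : aSL ^ 3 = 1 := Subtype.ext (by decide)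
lemma b3 : bSL ^ 3 = 1 := Subtype.ext (by decide)

lemma pow_mod3 {G : Type*} [Group G] {g : G} (hg : g ^ 3 = 1) (n : ℕ) :
    g ^ (n % 3) = g ^ n := by
  conv_rhs => rw [← Nat.div_add_mod n 3]
  rw [pow_add, pow_mul, hg, one_pow, one_mul]

/-- The homomorphism `ℤ/3 → G` sending `1` to an element whose cube is `1`. -/
def mkHom {G : Type*} [Group G] (g : G) (hg : g ^ 3 = 1) : M3 →* G :=
  MonoidHom.mk' (fun x => g ^ (Multiplicative.toAdd x).val)
    (fun x y => by
      show g ^ (Multiplicative.toAdd x + Multiplicative.toAdd y).val = _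
      rw [ZMod.val_add, pow_mod3 hg, pow_add])

lemma mkHom_apply {G : Type*} [Group G] (g : G) (hg : g ^ 3 = 1) (x : ZMod 3) :
    mkHom g hg (Multiplicative.ofAdd x) = g ^ x.val := rfl

lemma mkHom_one' {G : Type*} [Group G] (g : G) (hg : g ^ 3 = 1) :
    mkHom g hg (Multiplicative.ofAdd 1) = g := by
  rw [mkHom_apply]
  norm_num [show (1 : ZMod 3).val = 1 from rfl]

lemma mkHom_two' {G : Type*} [Group G] (g : G) (hg : g ^ 3 = 1) :
    mkHom g hg (Multiplicative.ofAdd 2) = g ^ 2 := by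
  rw [mkHom_apply, show (2 : ZMod 3).val = 2 from rfl]

def Xa : Set (Fin 2 → ℤ) := {v | (v 0 - v 1) * v 1 ≤ 0 ∧ v 1 ≠ 0}
def Xb : Set (Fin 2 → ℤ) := {v | 0 < (v 0 - v 1) * v 1 ∨ (v 1 = 0 ∧ v 0 ≠ 0)}

def fA : M3 →* SL2 := mkHom aSL a3
def fB : M3 →* SL2 := mkHom bSL b3

def fF : ∀ _ : Bool, M3 →* SL2 := fun i => cond i fA fB
def XF : Bool → Set (Fin 2 → ℤ) := fun i => cond i Xa Xb

lemma a2_coe : ((aSL : Matrix (Fin 2) (Fin 2) ℤ)) ^ 2 = !![-1,1;-1,0] := by decide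
lemma b2_coe : ((bSL : Matrix (Fin 2) (Fin 2) ℤ)) ^ 2 = !![-2,3;-1,1] := by decide

lemma aSL_smul (v : Fin 2 → ℤ) : aSL • v = ![-v 1, v 0 - v 1] := by
  funext i
  rw [smul_def]
  fin_cases i <;>
    simp [smul_def, aSL, Matrix.mulVec, dotProduct, Fin.sum_univ_two] <;> ring

lemma a2SL_smul (v : Fin 2 → ℤ) : (aSL ^ 2) • v = ![v 1 - v 0, -v 0] := by
  funext i
  fin_cases i <;>
    simp [smul_def, a2_coe, Matrix.mulVec, dotProduct, Fin.sum_univ_two] <;> ring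

lemma bSL_smul (v : Fin 2 → ℤ) : bSL • v = ![v 0 - 3 * v 1, v 0 - 2 * v 1] := by
  funext i
  rw [smul_def]
  fin_cases i <;>
    simp [smul_def, bSL, Matrix.mulVec, dotProduct, Fin.sum_univ_two] <;> ring

lemma b2SL_smul (v : Fin 2 → ℤ) : (bSL ^ 2) • v = ![3 * v 1 - 2 * v 0, v 1 - v 0] := by
  funext i
  fin_cases i <;>
    simp [smul_def, b2_coe, Matrix.mulVec, dotProduct, Fin.sum_univ_two] <;> ring

lemma pingA1 : ∀ v ∈ Xb, aSL • v ∈ Xa := by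
  rintro v hv
  rw [aSL_smul]
  simp only [Xb, Set.mem_setOf_eq] at hv
  simp only [Xa, Set.mem_setOf_eq, Matrix.cons_val_zero, Matrix.cons_val_one, Matrix.head_cons]
  rcases hv with h | ⟨h1, h0⟩
  · refine ⟨by nlinarith [sq_nonneg (v 0 - v 1)], fun hc => ?_⟩
    rw [sub_eq_zero] at hc
    rw [hc] at h
    simp at h
  · rw [h1]
    exact ⟨by nlinarith [mul_self_nonneg (v 0)], by simpa using h0⟩

lemma pingA2 : ∀ v ∈ Xb, (aSL ^ 2) • v ∈ Xa := by
  rintro v hv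
  rw [a2SL_smul]
  simp only [Xb, Set.mem_setOf_eq] at hv
  simp only [Xa, Set.mem_setOf_eq, Matrix.cons_val_zero, Matrix.cons_val_one, Matrix.head_cons]
  rcases hv with h | ⟨h1, h0⟩
  · refine ⟨by nlinarith [sq_nonneg (v 1)], fun hc => ?_⟩
    have hx : v 0 = 0 := by omega
    rw [hx] at h
    nlinarith [sq_nonneg (v 1)]
  · rw [h1]
    exact ⟨by simp, by simpa using h0⟩

lemma pingB1 : ∀ v ∈ Xa, bSL • v ∈ Xb := by
  rintro v ⟨h, h1⟩
  rw [bSL_smul]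
  simp only [Xb, Set.mem_setOf_eq, Matrix.cons_val_zero, Matrix.cons_val_one, Matrix.head_cons]
  left
  nlinarith [mul_self_pos.mpr h1]

lemma pingB2 : ∀ v ∈ Xa, (bSL ^ 2) • v ∈ Xb := by
  rintro v ⟨h, h1⟩
  rw [b2SL_smul]
  simp only [Xb, Set.mem_setOf_eq, Matrix.cons_val_zero, Matrix.cons_val_one, Matrix.head_cons]
  rcases eq_or_ne (v 0) (v 1) with he | hne
  · right
    rw [he]
    exact ⟨by ring, fun hc => h1 (by omega)⟩
  · left
    have h' : (v 0 - v 1) * v 1 < 0 :=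
      lt_of_le_of_ne h (by simp [mul_eq_zero, sub_eq_zero, hne, h1])
    nlinarith [mul_self_pos.mpr (sub_ne_zero.mpr hne)]

open scoped Pointwise in
lemma hpp : Pairwise fun i j => ∀ h : M3, h ≠ 1 → fF i h • XF j ⊆ XF i := by
  have key : ∀ (g : SL2) (S T : Set (Fin 2 → ℤ)),
      (∀ v ∈ S, g • v ∈ T) → g • S ⊆ T := by
    rintro g S T hg _ ⟨v, hv, rfl⟩; exact hg v hv
  intro i j hij h hne
  have hcases : h = Multiplicative.ofAdd 0 ∨ h = Multiplicative.ofAdd 1 ∨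
      h = Multiplicative.ofAdd 2 := by revert h; decide
  rcases hcases with rfl | rfl | rfl
  · exact absurd rfl hne
  · cases i <;> cases j
    · exact absurd rfl hij
    · exact key _ _ _ (by
        show ∀ v ∈ Xa, fB (Multiplicative.ofAdd 1) • v ∈ Xb
        rw [show fB (Multiplicative.ofAdd 1) = bSL from mkHom_one' _ _]
        exact pingB1)
    · exact key _ _ _ (by
        show ∀ v ∈ Xb, fA (Multiplicative.ofAdd 1) • v ∈ Xa
        rw [show fA (Multiplicative.ofAdd 1) = aSL from mkHom_one' _ _]
        exact pingA1)
    · exact absurd rfl hij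
  · cases i <;> cases j
    · exact absurd rfl hij
    · exact key _ _ _ (by
        show ∀ v ∈ Xa, fB (Multiplicative.ofAdd 2) • v ∈ Xb
        rw [show fB (Multiplicative.ofAdd 2) = bSL ^ 2 from mkHom_two' _ _]
        exact pingB2)
    · exact key _ _ _ (by
        show ∀ v ∈ Xb, fA (Multiplicative.ofAdd 2) • v ∈ Xa
        rw [show fA (Multiplicative.ofAdd 2) = aSL ^ 2 from mkHom_two' _ _]
        exact pingA2)
    · exact absurd rfl hij

lemma hXdisj : Pairwise (Function.onFun Disjoint XF) := by
  have : Disjoint Xa Xb := by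
    rw [Set.disjoint_left]
    rintro v ⟨h, h1⟩ (hb | ⟨hb1, _⟩)
    · exact absurd (lt_of_lt_of_le hb h) (lt_irrefl 0)
    · exact h1 hb1
  intro i j hij
  cases i <;> cases j <;> first
    | exact absurd rfl hij
    | exact this.symm
    | exact this

lemma hXne : ∀ i, (XF i).Nonempty := by
  intro i
  cases i
  · exact ⟨![1, 0], Or.inr ⟨rfl, one_ne_zero⟩⟩
  · refine ⟨![0, 1], ?_, ?_⟩ <;> simp

/-- The lift to the free product of the indexed family is injective (ping-pong). -/
lemma injPsi : Function.Injective (Monoid.CoprodI.lift fF) := by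
  apply Monoid.CoprodI.lift_injective_of_ping_pong fF _ XF hXne hXdisj hpp
  right
  exact ⟨true, by simp [Cardinal.mk_fintype]⟩

def k : Monoid.Coprod M3 M3 →* Monoid.CoprodI (fun _ : Bool => M3) :=
  Monoid.Coprod.lift
    (Monoid.CoprodI.of (M := fun _ : Bool => M3) (i := true))
    (Monoid.CoprodI.of (M := fun _ : Bool => M3) (i := false))

def l : Monoid.CoprodI (fun _ : Bool => M3) →* Monoid.Coprod M3 M3 :=
  Monoid.CoprodI.lift (fun i => cond i Monoid.Coprod.inl Monoid.Coprod.inr)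

lemma lk : ∀ x, l (k x) = x := by
  have h : l.comp k = MonoidHom.id _ := by
    apply Monoid.Coprod.hom_ext <;> ext x <;>
      simp [k, l, Monoid.Coprod.lift_apply_inl, Monoid.Coprod.lift_apply_inr,
        Monoid.CoprodI.lift_of]
  intro x
  calc l (k x) = (l.comp k) x := rfl
    _ = x := by rw [h]; rfl

def phi : Monoid.Coprod M3 M3 →* SL2 := Monoid.Coprod.lift fA fB

lemma phi_eq : phi = (Monoid.CoprodI.lift fF).comp k := by
  apply Monoid.Coprod.hom_ext <;> ext x <;>
    simp [phi, k, fF, Monoid.Coprod.lift_apply_inl, Monoid.Coprod.lift_apply_inr,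
      Monoid.CoprodI.lift_of]

lemma injPhi : Function.Injective phi := by
  rw [phi_eq]
  exact injPsi.comp (Function.LeftInverse.injective lk)

lemma range_mkHom {G : Type*} [Group G] (g : G) (hg : g ^ 3 = 1) :
    (mkHom g hg).range = Subgroup.closure {g} := by
  apply le_antisymm
  · rintro _ ⟨x, rfl⟩
    exact Subgroup.pow_mem _ (Subgroup.subset_closure (Set.mem_singleton _)) _
  · rw [Subgroup.closure_le]
    rintro _ rfl
    exact ⟨Multiplicative.ofAdd 1, mkHom_one' _ _⟩

lemma range_phi : phi.range = Subgroup.closure {aSL, bSL} := by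
  rw [phi, Monoid.Coprod.range_lift, fA, fB, range_mkHom, range_mkHom,
    ← Subgroup.closure_union, Set.singleton_union]

end VeechAux

/-- The subgroup of SL(2,ℤ) generated by a and b is isomorphic to the free
product ℤ/3ℤ ∗ ℤ/3ℤ. -/
theorem veech_group_free_product :
    Nonempty ((Subgroup.closure {aSL, bSL} : Subgroup (Matrix.SpecialLinearGroup (Fin 2) ℤ))
      ≃* Monoid.Coprod (Multiplicative (ZMod 3)) (Multiplicative (ZMod 3))) := by
  exact ⟨(MulEquiv.subgroupCongr VeechAux.range_phi.symm).trans
    (MonoidHom.ofInjective VeechAux.injPhi).symm⟩
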